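/- Let n ≥ 2, let R be the quotient of ℚ[X_0, …, X_{n−1}] by the ideal generated by X_i² for all i, and let φ : R → ℚ[X]/(X²) be the ℚ-algebra homomorphism sending the class x_i of each X_i to the class of X. Then (ker φ)^n ≠ 0 and (ker φ)^{n+1} = 0; that is, nil(ker φ) = n. -/

import Mathlib

set_option synthInstance.maxHeartbeats 400000
set_option maxHeartbeats 1000000

open MvPolynomial

/-- The ideal of polynomials all of whose monomials have total degree ≥ k. -/
noncomputable def degIdeal (n k : ℕ) : Ideal (MvPolynomial (Fin n) ℚ) where
  carrier := {p | ∀ d ∈ p.support, k ≤ ∑ i, d i}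
  zero_mem' := by simp
  add_mem' := by
    intro p q hp hq d hd
    rcases Finset.mem_union.mp (MvPolynomial.support_add hd) with h | h
    · exact hp d h
    · exact hq d h
  smul_mem' := by
    intro c p hp d hd
    rw [smul_eq_mul] at hd
    obtain ⟨d1, h1, d2, h2, rfl⟩ := Finset.mem_add.mp (MvPolynomial.support_mul c p hd)
    calc k ≤ ∑ i, d2 i := hp d2 h2
    _ ≤ ∑ i, (d1 + d2) i := by
        apply Finset.sum_le_sum; intro i _; simp [Finsupp.add_apply]

theorem prod_mem_pow_card' {R ι : Type*} [CommRing R] (K : Ideal R) (s : Finset ι)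
    (f : ι → R) (h : ∀ i ∈ s, f i ∈ K) : ∏ i ∈ s, f i ∈ K ^ s.card := by
  classical
  induction s using Finset.induction with
  | empty => simp [Ideal.one_eq_top]
  | @insert a t ha ih =>
    rw [Finset.prod_insert ha, Finset.card_insert_of_notMem ha, pow_succ']
    exact Ideal.mul_mem_mul (h a (Finset.mem_insert_self a t))
      (ih fun i hi => h i (Finset.mem_insert_of_mem hi))

theorem nil_ker_mul_even_sphere (n : ℕ) (hn : 2 ≤ n)
    (I : Ideal (MvPolynomial (Fin n) ℚ))
    (hI : I = Ideal.span (Set.range fun i : Fin n => MvPolynomial.X i ^ 2))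
    (J : Ideal (Polynomial ℚ))
    (hJ : J = Ideal.span {Polynomial.X ^ 2})
    (φ : (MvPolynomial (Fin n) ℚ ⧸ I) →ₐ[ℚ] (Polynomial ℚ ⧸ J))
    (hφ : ∀ i : Fin n,
      φ (Ideal.Quotient.mk I (MvPolynomial.X i)) = Ideal.Quotient.mk J Polynomial.X) :
    (RingHom.ker φ) ^ n ≠ ⊥ ∧ (RingHom.ker φ) ^ (n + 1) = ⊥ := by
  classical
  obtain ⟨m, rfl⟩ : ∃ m, n = m + 2 := ⟨n - 2, by omega⟩
  set R := MvPolynomial (Fin (m + 2)) ℚ ⧸ I with hR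
  set mk : MvPolynomial (Fin (m + 2)) ℚ →+* R := Ideal.Quotient.mk I with hmk
  set x : Fin (m + 2) → R := fun i => mk (X i) with hx
  set K : Ideal R := RingHom.ker φ with hK
  have h10 : (1 : Fin (m + 2)) ≠ 0 := Fin.ne_of_val_ne (by simp)
  -- characterization of membership in I
  have hIc : ∀ p : MvPolynomial (Fin (m + 2)) ℚ,
      p ∈ I ↔ ∀ d ∈ p.support, ∃ i : Fin (m + 2), 2 ≤ d i := by
    intro p
    have hset : (Set.range fun i : Fin (m + 2) => (X i : MvPolynomial (Fin (m + 2)) ℚ) ^ 2)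
        = (fun s => monomial s (1 : ℚ)) '' (Set.range fun i : Fin (m + 2) => Finsupp.single i 2) := by
      rw [← Set.range_comp]
      apply Set.ext; intro q
      simp [Function.comp, X_pow_eq_monomial]
    rw [hI, hset, mem_ideal_span_monomial_image]
    constructor
    · intro h d hd
      obtain ⟨si, ⟨i, rfl⟩, hle⟩ := h d hd
      exact ⟨i, Finsupp.single_le_iff.mp hle⟩
    · intro h d hd
      obtain ⟨i, hi⟩ := h d hd
      exact ⟨Finsupp.single i 2, ⟨i, rfl⟩, Finsupp.single_le_iff.mpr hi⟩
  -- squares vanish in R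
  have hsq : ∀ i : Fin (m + 2), x i ^ 2 = 0 := by
    intro i
    have : mk (X i ^ 2) = 0 := by
      rw [hmk, Ideal.Quotient.eq_zero_iff_mem, hI]
      exact Ideal.subset_span ⟨i, rfl⟩
    simpa [hx] using this
  -- the full squarefree monomial
  have hprodX : (∏ i : Fin (m + 2), (X i : MvPolynomial (Fin (m + 2)) ℚ))
      = monomial (∑ i : Fin (m + 2), Finsupp.single i 1) 1 := by
    have key : ∀ s : Finset (Fin (m + 2)), (∏ i ∈ s, (X i : MvPolynomial (Fin (m + 2)) ℚ))
        = monomial (∑ i ∈ s, Finsupp.single i 1) 1 := by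
      intro s
      induction s using Finset.induction with
      | empty => simp [MvPolynomial.monomial_zero']
      | @insert a t ha ih =>
        have hX : (X a : MvPolynomial (Fin (m + 2)) ℚ) = monomial (Finsupp.single a 1) 1 := by
          rw [← X_pow_eq_monomial, pow_one]
        rw [Finset.prod_insert ha, Finset.sum_insert ha, ih, hX, monomial_mul, one_mul]
    exact key Finset.univ
  have hm1 : ∀ j : Fin (m + 2), (∑ i : Fin (m + 2), Finsupp.single i (1 : ℕ)) j = 1 := by
    intro j
    rw [Finsupp.finset_sum_apply]
    simp [Finsupp.single_apply]
  have hXprod_ne : mk (∏ i : Fin (m + 2), X i) ≠ 0 := by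
    rw [hmk, Ne, Ideal.Quotient.eq_zero_iff_mem, hIc]
    intro h
    have hmem : (∑ i : Fin (m + 2), Finsupp.single i (1 : ℕ)) ∈
        (∏ i : Fin (m + 2), (X i : MvPolynomial (Fin (m + 2)) ℚ)).support := by
      rw [hprodX]
      simp [support_monomial]
    obtain ⟨i, hi⟩ := h _ hmem
    rw [hm1 i] at hi
    omega
  -- PART 1 : K ^ (m + 2) ≠ ⊥
  have hker : ∀ i j : Fin (m + 2), x i - x j ∈ K := by
    intro i j
    rw [hK, RingHom.mem_ker, map_sub, hx]
    simp only
    rw [hφ i, hφ j, sub_self]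
  set f : Fin (m + 2) → R := fun i => if i = 0 then x 0 - x 1 else x i - x 0 with hf
  have hfK : ∀ i, f i ∈ K := by
    intro i
    by_cases h : i = 0 <;> simp [hf, h, hker]
  set s : Finset (Fin (m + 2)) := (Finset.univ.erase 0).erase 1 with hs
  have h1mem : (1 : Fin (m + 2)) ∈ Finset.univ.erase (0 : Fin (m + 2)) :=
    Finset.mem_erase.mpr ⟨h10, Finset.mem_univ 1⟩
  have hsplit : ∀ g : Fin (m + 2) → R,
      ∏ i : Fin (m + 2), g i = g 0 * (g 1 * ∏ i ∈ s, g i) := by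
    intro g
    rw [hs, Finset.mul_prod_erase _ _ h1mem, Finset.mul_prod_erase _ _ (Finset.mem_univ 0)]
  have claimA : ∀ t : Finset (Fin (m + 2)),
      x 0 * x 1 * ∏ i ∈ t, (x i - x 0) = x 0 * x 1 * ∏ i ∈ t, x i := by
    intro t
    induction t using Finset.induction with
    | empty => simp
    | @insert a t ha ih =>
      rw [Finset.prod_insert ha, Finset.prod_insert ha]
      linear_combination (x a - x 0) * ih + (-(x 1 * ∏ i ∈ t, x i)) * hsq 0
  have claimB : (x 0 - x 1) * (x 1 - x 0) = 2 * (x 0 * x 1) := by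
    linear_combination -hsq 0 - hsq 1
  have hprod_f : ∏ i : Fin (m + 2), f i = 2 * ∏ i : Fin (m + 2), x i := by
    have hfs : ∏ i ∈ s, f i = ∏ i ∈ s, (x i - x 0) := by
      apply Finset.prod_congr rfl
      intro i hi
      have : i ≠ 0 := (Finset.mem_erase.mp (Finset.mem_erase.mp hi).2).1
      simp [hf, this]
    rw [hsplit f, hfs, hsplit x]
    have hf0 : f 0 = x 0 - x 1 := by simp [hf]
    have hf1 : f 1 = x 1 - x 0 := by simp [hf, h10]
    rw [hf0, hf1, ← mul_assoc, claimB]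
    calc 2 * (x 0 * x 1) * ∏ i ∈ s, (x i - x 0)
        = 2 * (x 0 * x 1 * ∏ i ∈ s, (x i - x 0)) := by ring
      _ = 2 * (x 0 * x 1 * ∏ i ∈ s, x i) := by rw [claimA]
      _ = 2 * (x 0 * (x 1 * ∏ i ∈ s, x i)) := by ring
  have part1 : K ^ (m + 2) ≠ ⊥ := by
    intro hbot
    have hg : ∏ i : Fin (m + 2), f i ∈ K ^ (m + 2) := by
      have := prod_mem_pow_card' K Finset.univ f (fun i _ => hfK i)
      rwa [Finset.card_univ, Fintype.card_fin] at this
    rw [hbot, Ideal.mem_bot, hprod_f] at hg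
    have hpx : (∏ i : Fin (m + 2), x i) = mk (∏ i : Fin (m + 2), X i) := by
      rw [hx, map_prod]
    rw [hpx] at hg
    have hu : IsUnit (2 : R) := by
      have h2q : IsUnit (2 : ℚ) := isUnit_iff_ne_zero.mpr two_ne_zero
      have := h2q.map (algebraMap ℚ R)
      rwa [map_ofNat] at this
    exact hXprod_ne ((hu.mul_right_eq_zero).mp hg)
  -- PART 2 : K ^ (n+1) = ⊥
  set M₀ : Ideal (MvPolynomial (Fin (m + 2)) ℚ) := Ideal.span (Set.range X) with hM0def
  have hM0c : ∀ q : MvPolynomial (Fin (m + 2)) ℚ,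
      q ∈ M₀ ↔ ∀ d ∈ q.support, ∃ i : Fin (m + 2), d i ≠ 0 := by
    intro q
    rw [hM0def, show (Set.range (X : Fin (m + 2) → MvPolynomial (Fin (m + 2)) ℚ))
      = X '' Set.univ by rw [Set.image_univ], mem_ideal_span_X_image]
    simp
  have hKle : K ≤ Ideal.map mk M₀ := by
    intro a ha
    obtain ⟨p, rfl⟩ := Ideal.Quotient.mk_surjective a
    set c : ℚ := coeff 0 p with hc
    set q : MvPolynomial (Fin (m + 2)) ℚ := p - C c with hq
    have hqM : q ∈ M₀ := by
      rw [hM0c]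
      intro d hd
      by_contra h
      push_neg at h
      have hd0 : d = 0 := Finsupp.ext fun i => h i
      rw [MvPolynomial.mem_support_iff, hd0, hq] at hd
      apply hd
      simp [coeff_sub, hc]
    have hcomm : φ (mk (C c)) = algebraMap ℚ (Polynomial ℚ ⧸ J) c := by
      have : mk (C c) = algebraMap ℚ R c := by
        rw [IsScalarTower.algebraMap_apply ℚ (MvPolynomial (Fin (m + 2)) ℚ) R, hmk]
        rfl
      rw [this, AlgHom.commutes]
    have hφq : φ (mk q) ∈ Ideal.span {Ideal.Quotient.mk J Polynomial.X} := by
      have hle : M₀ ≤ Ideal.comap ((φ : R →+* Polynomial ℚ ⧸ J).comp mk)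
          (Ideal.span {Ideal.Quotient.mk J Polynomial.X}) := by
        rw [hM0def, Ideal.span_le]
        rintro _ ⟨i, rfl⟩
        rw [SetLike.mem_coe, Ideal.mem_comap, RingHom.comp_apply]
        show φ (mk (X i)) ∈ _
        rw [hmk]
        rw [hφ i]
        exact Ideal.subset_span rfl
      exact hle hqM
    have hc0 : c = 0 := by
      have hφa : φ ((Ideal.Quotient.mk I) p) = 0 := ha
      have hpq : p = C c + q := by rw [hq]; ring
      have hneg : algebraMap ℚ (Polynomial ℚ ⧸ J) c = -(φ (mk q)) := by
        rw [show (Ideal.Quotient.mk I) p = mk p from rfl, hpq, map_add, map_add, hcomm] at hφa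
        exact eq_neg_of_add_eq_zero_left hφa
      have hmem : algebraMap ℚ (Polynomial ℚ ⧸ J) c
          ∈ Ideal.span {Ideal.Quotient.mk J Polynomial.X} := by
        rw [hneg]; exact neg_mem hφq
      have hspan : Ideal.span {Ideal.Quotient.mk J Polynomial.X}
          = Ideal.map (Ideal.Quotient.mk J) (Ideal.span {Polynomial.X}) := by
        rw [Ideal.map_span, Set.image_singleton]
      rw [hspan, Ideal.mem_map_iff_of_surjective _ Ideal.Quotient.mk_surjective] at hmem
      obtain ⟨y, hy, hyc⟩ := hmem
      have halg : algebraMap ℚ (Polynomial ℚ ⧸ J) c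
          = Ideal.Quotient.mk J (Polynomial.C c) := by
        rw [IsScalarTower.algebraMap_apply ℚ (Polynomial ℚ) (Polynomial ℚ ⧸ J)]
        rfl
      have hsub : Polynomial.C c - y ∈ J :=
        Ideal.Quotient.eq.mp (by rw [← halg, hyc])
      have hJle : J ≤ Ideal.span {Polynomial.X} := by
        rw [hJ, Ideal.span_le]
        intro z hz
        rw [Set.mem_singleton_iff] at hz
        subst hz
        exact Ideal.mem_span_singleton.mpr ⟨Polynomial.X, sq Polynomial.X⟩
      have hCc : Polynomial.C c ∈ Ideal.span {Polynomial.X} := by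
        have := add_mem hy (hJle hsub)
        simpa using this
      rw [Ideal.mem_span_singleton, Polynomial.X_dvd_iff] at hCc
      simpa using hCc
    have : (Ideal.Quotient.mk I) p = mk q := by
      rw [hq, hc0, map_sub]
      simp [hmk]
    rw [this]
    exact Ideal.mem_map_of_mem mk hqM
  have hdeg : ∀ k, M₀ ^ k ≤ degIdeal (m + 2) k := by
    intro k
    induction k with
    | zero =>
      intro p _ d _
      exact Nat.zero_le _
    | succ k ih =>
      rw [pow_succ]
      refine Ideal.mul_le.mpr fun r hr t ht => ?_
      intro d hd
      obtain ⟨d1, h1, d2, h2, rfl⟩ := Finset.mem_add.mp (MvPolynomial.support_mul r t hd)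
      have hr' : k ≤ ∑ i, d1 i := ih hr d1 h1
      have ht' : 1 ≤ ∑ i, d2 i := by
        obtain ⟨i, hi⟩ := (hM0c t).mp ht d2 h2
        calc 1 ≤ d2 i := Nat.one_le_iff_ne_zero.mpr hi
          _ ≤ ∑ j, d2 j := Finset.single_le_sum (fun j _ => Nat.zero_le _) (Finset.mem_univ i)
      have : ∑ i, (d1 + d2) i = (∑ i, d1 i) + ∑ i, d2 i := by
        simp [Finsupp.add_apply, Finset.sum_add_distrib]
      omega
  have hM0pow : M₀ ^ (m + 2 + 1) ≤ I := by
    intro p hp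
    rw [hIc]
    intro d hd
    have h1 := hdeg (m + 2 + 1) hp d hd
    by_contra h
    push_neg at h
    have : ∑ i, d i ≤ m + 2 := by
      calc ∑ i, d i ≤ ∑ _i : Fin (m + 2), 1 := Finset.sum_le_sum fun i _ => by
            have := h i; omega
        _ = m + 2 := by simp
    omega
  have part2 : K ^ (m + 2 + 1) = ⊥ := by
    rw [← le_bot_iff]
    calc K ^ (m + 2 + 1) ≤ (Ideal.map mk M₀) ^ (m + 2 + 1) := Ideal.pow_right_mono hKle _
      _ = Ideal.map mk (M₀ ^ (m + 2 + 1)) := (Ideal.map_pow mk M₀ (m + 2 + 1)).symm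
      _ ≤ Ideal.map mk I := Ideal.map_mono hM0pow
      _ = ⊥ := by rw [hmk]; exact Ideal.map_quotient_self I
  exact ⟨part1, part2⟩
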